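/- Let f, ℓ₀ be smooth real-valued functions on a neighborhood of x ∈ ℝ^d with ∇f(x) = 0, ℓ₀(x) = 0, ∇ℓ₀(x) ≠ 0, and suppose the eikonal equation 2 ∇f · ∇ℓ₀ + |∇ℓ₀|² ℓ₀ = 0 holds in a neighborhood of x. Then Hess f(x) ∇ℓ₀(x) = −½ |∇ℓ₀(x)|² ∇ℓ₀(x); in particular, ∇ℓ₀(x) is an eigenvector of Hess f(x) with negative eigenvalue μ = −|∇ℓ₀(x)|²/2, i.e. |∇ℓ₀(x)|² = −2μ. -/

import Mathlib

open Metric Set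

noncomputable section

/-- The Hessian of `f` at `x`, as the continuous linear map `v ↦ ∂_v (∇f)(x)`. -/
def hessOp {d : ℕ} (f : EuclideanSpace ℝ (Fin d) → ℝ) (x : EuclideanSpace ℝ (Fin d)) :
    EuclideanSpace ℝ (Fin d) →L[ℝ] EuclideanSpace ℝ (Fin d) :=
  fderiv ℝ (gradient f) x

section aux

variable {d : ℕ}

lemma gradient_eq_comp (f : EuclideanSpace ℝ (Fin d) → ℝ) :
    gradient f = (InnerProductSpace.toDual ℝ (EuclideanSpace ℝ (Fin d))).symm ∘ fderiv ℝ f := rfl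

lemma hessOp_inner (f : EuclideanSpace ℝ (Fin d) → ℝ) (x : EuclideanSpace ℝ (Fin d))
    (v w : EuclideanSpace ℝ (Fin d)) :
    (inner ℝ (hessOp f x v) w : ℝ) = fderiv ℝ (fderiv ℝ f) x v w := by
  rw [hessOp, gradient_eq_comp,
    (InnerProductSpace.toDual ℝ (EuclideanSpace ℝ (Fin d))).symm.comp_fderiv]
  simp only [ContinuousLinearMap.coe_comp', Function.comp_apply,
    ContinuousLinearEquiv.coe_coe, LinearIsometryEquiv.coe_toContinuousLinearEquiv]
  exact InnerProductSpace.toDual_symm_apply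

end aux

/-- **`∇ℓ₀` is an eigenvector of the Hessian at critical points.**
Let `f, ℓ₀` be smooth near `x ∈ ℝ^d` with `∇f(x) = 0`, `ℓ₀(x) = 0`, `∇ℓ₀(x) ≠ 0`,
and suppose the eikonal equation `2 ∇f·∇ℓ₀ + |∇ℓ₀|² ℓ₀ = 0` holds near `x`. Then
`Hess f(x) ∇ℓ₀(x) = -½|∇ℓ₀(x)|² ∇ℓ₀(x)`; in particular `∇ℓ₀(x)` is an eigenvector of
`Hess f(x)` with negative eigenvalue `μ = -|∇ℓ₀(x)|²/2`, i.e. `|∇ℓ₀(x)|² = -2μ`. -/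
theorem hess_gradient_eigenvector_of_eikonal
    {d : ℕ} (f ℓ₀ : EuclideanSpace ℝ (Fin d) → ℝ) (x : EuclideanSpace ℝ (Fin d))
    (U : Set (EuclideanSpace ℝ (Fin d))) (hU : IsOpen U) (hxU : x ∈ U)
    (hf : ContDiffOn ℝ (⊤ : ℕ∞) f U) (hℓ₀ : ContDiffOn ℝ (⊤ : ℕ∞) ℓ₀ U)
    (hcrit : gradient f x = 0) (hℓx : ℓ₀ x = 0) (hgrad : gradient ℓ₀ x ≠ 0)
    (heik : ∀ y ∈ U,
      2 * (inner ℝ (gradient f y) (gradient ℓ₀ y) : ℝ) + ‖gradient ℓ₀ y‖ ^ 2 * ℓ₀ y = 0) :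
    hessOp f x (gradient ℓ₀ x) = (- (1 / 2) * ‖gradient ℓ₀ x‖ ^ 2) • gradient ℓ₀ x ∧
      ∃ μ : ℝ, μ < 0 ∧ ‖gradient ℓ₀ x‖ ^ 2 = - 2 * μ ∧
        hessOp f x (gradient ℓ₀ x) = μ • gradient ℓ₀ x := by
  have hfx : ContDiffAt ℝ (⊤ : ℕ∞) f x := hf.contDiffAt (hU.mem_nhds hxU)
  have hℓcd : ContDiffAt ℝ (⊤ : ℕ∞) ℓ₀ x := hℓ₀.contDiffAt (hU.mem_nhds hxU)
  have hf' : ContDiffAt ℝ (1 : ℕ∞) (fderiv ℝ f) x :=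
    hfx.fderiv_right (WithTop.coe_le_coe.mpr le_top)
  have hℓ' : ContDiffAt ℝ (1 : ℕ∞) (fderiv ℝ ℓ₀) x :=
    hℓcd.fderiv_right (WithTop.coe_le_coe.mpr le_top)
  have hdf' : DifferentiableAt ℝ (fderiv ℝ f) x := hf'.differentiableAt (by simp)
  have hdℓ' : DifferentiableAt ℝ (fderiv ℝ ℓ₀) x := hℓ'.differentiableAt (by simp)
  have hdF : DifferentiableAt ℝ (gradient f) x := by
    rw [gradient_eq_comp]
    exact ((InnerProductSpace.toDual ℝ
      (EuclideanSpace ℝ (Fin d))).symm.toContinuousLinearEquiv.differentiableAt).comp x hdf'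
  have hdG : DifferentiableAt ℝ (gradient ℓ₀) x := by
    rw [gradient_eq_comp]
    exact ((InnerProductSpace.toDual ℝ
      (EuclideanSpace ℝ (Fin d))).symm.toContinuousLinearEquiv.differentiableAt).comp x hdℓ'
  have hdℓ : DifferentiableAt ℝ ℓ₀ x := hℓcd.differentiableAt (by simp)
  set G : EuclideanSpace ℝ (Fin d) := gradient ℓ₀ x with hG
  -- the eikonal function vanishes near x, so its fderiv at x is 0
  set h : EuclideanSpace ℝ (Fin d) → ℝ := fun y =>
    2 * (inner ℝ (gradient f y) (gradient ℓ₀ y) : ℝ) + ‖gradient ℓ₀ y‖ ^ 2 * ℓ₀ y with hh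
  have hzero : h =ᶠ[nhds x] (fun _ => (0 : ℝ)) :=
    Filter.eventuallyEq_of_mem (hU.mem_nhds hxU) (fun y hy => heik y hy)
  have hfd0 : fderiv ℝ h x = 0 := by
    rw [hzero.fderiv_eq, fderiv_const_apply]
  have hinner : DifferentiableAt ℝ (fun y => (inner ℝ (gradient f y) (gradient ℓ₀ y) : ℝ)) x :=
    hdF.inner ℝ hdG
  have hnormeq : (fun y => ‖gradient ℓ₀ y‖ ^ 2)
      = fun y => (inner ℝ (gradient ℓ₀ y) (gradient ℓ₀ y) : ℝ) := by
    funext y; rw [real_inner_self_eq_norm_sq]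
  have hnorm : DifferentiableAt ℝ (fun y => ‖gradient ℓ₀ y‖ ^ 2) x := by
    rw [hnormeq]; exact hdG.inner ℝ hdG
  have key : ∀ v, fderiv ℝ h x v =
      2 * ((inner ℝ (gradient f x) (fderiv ℝ (gradient ℓ₀) x v) : ℝ) +
          (inner ℝ (fderiv ℝ (gradient f) x v) G : ℝ)) +
        ((fderiv ℝ (fun y => ‖gradient ℓ₀ y‖ ^ 2) x v) * ℓ₀ x +
          ‖G‖ ^ 2 * fderiv ℝ ℓ₀ x v) := by
    intro v
    rw [hh]
    rw [fderiv_fun_add (g := fun y => ‖gradient ℓ₀ y‖ ^ 2 * ℓ₀ y) (hinner.const_mul 2) (hnorm.mul hdℓ)]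
    simp only [ContinuousLinearMap.add_apply]
    rw [fderiv_const_mul hinner, fderiv_fun_mul hnorm hdℓ]
    simp only [ContinuousLinearMap.add_apply, ContinuousLinearMap.smul_apply, smul_eq_mul]
    rw [fderiv_inner_apply ℝ hdF hdG]
    ring
  have key2 : ∀ v, 2 * (inner ℝ (hessOp f x v) G : ℝ) + ‖G‖ ^ 2 * (inner ℝ G v : ℝ) = 0 := by
    intro v
    have hk := key v
    rw [hfd0] at hk
    simp only [ContinuousLinearMap.zero_apply] at hk
    rw [hcrit, hℓx] at hk
    simp only [inner_zero_left, zero_add, mul_zero, zero_add] at hk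
    have hgradℓ : fderiv ℝ ℓ₀ x v = (inner ℝ G v : ℝ) := by
      rw [hG, gradient]
      exact (InnerProductSpace.toDual_symm_apply).symm
    rw [hgradℓ] at hk
    have : (hessOp f x v) = fderiv ℝ (gradient f) x v := rfl
    rw [this]
    linarith
  have hsymm : IsSymmSndFDerivAt ℝ f x :=
    hfx.isSymmSndFDerivAt (by rw [minSmoothness_of_isRCLikeNormedField]; exact WithTop.coe_le_coe.mpr le_top)
  have hswap : ∀ v, (inner ℝ (hessOp f x v) G : ℝ) = (inner ℝ (hessOp f x G) v : ℝ) := by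
    intro v
    rw [hessOp_inner, hessOp_inner, hsymm v G]
  have key3 : ∀ v, (inner ℝ (hessOp f x G + ((1:ℝ)/2 * ‖G‖ ^ 2) • G) v : ℝ) = 0 := by
    intro v
    have hk := key2 v
    rw [hswap v] at hk
    rw [inner_add_left, real_inner_smul_left]
    linarith
  have hmain : hessOp f x G = (- (1 / 2) * ‖G‖ ^ 2) • G := by
    have h0 : hessOp f x G + ((1:ℝ)/2 * ‖G‖ ^ 2) • G = 0 :=
      inner_self_eq_zero.mp (key3 _)
    have := eq_neg_of_add_eq_zero_left h0
    rw [this, ← neg_smul]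
    norm_num
  refine ⟨hmain, -(1/2) * ‖G‖ ^ 2, ?_, by ring, hmain⟩
  have hGpos : 0 < ‖G‖ := norm_pos_iff.mpr hgrad
  nlinarith
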